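/- For a prime p, integers j ≥ 1 and m with 1 ≤ m ≤ p^j − 1, the p-adic valuation of the multinomial coefficient (m(p^j−1))!/((p^j−1)!)^m equals (m−1)j. -/

import Mathlib

open Nat

/-- Digit-sum recursion valid for all `a` (including `0`). -/
lemma sum_digits_rec {p : ℕ} (hp : 1 < p) (a : ℕ) :
    (p.digits a).sum = a % p + (p.digits (a / p)).sum := by
  rcases Nat.eq_zero_or_pos a with rfl | ha
  · simp
  · rw [Nat.digits_def' hp ha]; simp

/-- If `a + b = p ^ j - 1` then the base-`p` digit sums of `a` and `b` add to `j * (p - 1)`. -/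
lemma sum_digits_compl {p : ℕ} (hp : 1 < p) :
    ∀ j a b : ℕ, a + b = p ^ j - 1 →
      (p.digits a).sum + (p.digits b).sum = j * (p - 1) := by
  intro j
  induction j with
  | zero => intro a b h; simp at h; obtain ⟨rfl, rfl⟩ := h; simp
  | succ j ih =>
    intro a b h
    have hpos : 0 < p ^ j := Nat.pow_pos (by omega)
    have hps : p ^ (j + 1) = p * p ^ j := by rw [pow_succ]; ring
    have hdist : p * (p ^ j - 1) + p * 1 = p * p ^ j := by
      rw [← Nat.mul_add]; congr 1; omega
    have hsplit : p ^ (j + 1) - 1 = p * (p ^ j - 1) + (p - 1) := by omega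
    have hma : a % p < p := Nat.mod_lt _ (by omega)
    have hmb : b % p < p := Nat.mod_lt _ (by omega)
    have hda := Nat.div_add_mod a p
    have hdb := Nat.div_add_mod b p
    have hkey : p * (a / p + b / p) + (a % p + b % p) = p * (p ^ j - 1) + (p - 1) := by
      rw [Nat.mul_add]; omega
    have hmod : a % p + b % p = p - 1 := by
      have h1 : (p * (a / p + b / p) + (a % p + b % p)) % p = (p * (p ^ j - 1) + (p - 1)) % p := by
        rw [hkey]
      rw [Nat.mul_add_mod, Nat.mul_add_mod] at h1
      have h3 : (p - 1) % p = p - 1 := Nat.mod_eq_of_lt (by omega)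
      have h2 : (a % p + b % p) % p = a % p + b % p ∨
          (a % p + b % p) % p + p = a % p + b % p := by
        rcases Nat.lt_or_ge (a % p + b % p) p with hlt | hge
        · left; exact Nat.mod_eq_of_lt hlt
        · right
          have hs : a % p + b % p - p < p := by omega
          have h4 := Nat.mod_eq_sub_mod hge
          rw [h4, Nat.mod_eq_of_lt hs]; omega
      omega
    have hdiv : a / p + b / p = p ^ j - 1 := by
      have h5 : p * (a / p + b / p) = p * (p ^ j - 1) := by omega
      exact Nat.eq_of_mul_eq_mul_left (by omega) h5
    rw [sum_digits_rec hp a, sum_digits_rec hp b]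
    have hih := ih (a / p) (b / p) hdiv
    calc a % p + (p.digits (a / p)).sum + (b % p + (p.digits (b / p)).sum)
        = (a % p + b % p) + ((p.digits (a / p)).sum + (p.digits (b / p)).sum) := by ring
      _ = (p - 1) + j * (p - 1) := by rw [hmod, hih]
      _ = (j + 1) * (p - 1) := by ring

lemma sum_digits_pow_sub_one {p : ℕ} (hp : 1 < p) (j : ℕ) :
    (p.digits (p ^ j - 1)).sum = j * (p - 1) := by
  have := sum_digits_compl hp j (p ^ j - 1) 0 (by omega)
  simpa using this

lemma pow_dvd_factorial_mul (n : ℕ) : ∀ m : ℕ, (n)! ^ m ∣ (m * n)! := by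
  intro m
  induction m with
  | zero => simp
  | succ m ih =>
    have h1 : (m * n)! * (n)! ∣ (m * n + n)! := Nat.factorial_mul_factorial_dvd_factorial_add _ _
    have h2 : (n)! ^ (m + 1) = (n)! ^ m * (n)! := pow_succ _ _
    have h3 : (m + 1) * n = m * n + n := by ring
    rw [h2, h3]
    exact dvd_trans (mul_dvd_mul ih dvd_rfl) h1

lemma pow_sub_one_ge (p j : ℕ) (hp : 1 < p) : j * (p - 1) ≤ p ^ j - 1 := by
  induction j with
  | zero => simp
  | succ j ih =>
    have hpos : 0 < p ^ j := Nat.pow_pos (by omega)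
    have hps : p ^ (j + 1) = p * p ^ j := by rw [pow_succ]; ring
    have hm : p * (j * (p - 1) + 1) ≤ p * p ^ j := by
      apply Nat.mul_le_mul_left; omega
    have hdist : p * (j * (p - 1) + 1) = p * (j * (p - 1)) + p := by ring
    have hDd : j * (p - 1) ≤ p * (j * (p - 1)) :=
      Nat.le_mul_of_pos_left _ (by omega)
    have hexp : (j + 1) * (p - 1) = j * (p - 1) + (p - 1) := by ring
    omega

theorem stmt2 (p j m : ℕ) (hp : p.Prime) (hj : 1 ≤ j) (hm1 : 1 ≤ m) (hm2 : m ≤ p ^ j - 1) :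
    padicValNat p ((m * (p ^ j - 1)).factorial / ((p ^ j - 1).factorial) ^ m)
      = (m - 1) * j := by
  haveI : Fact p.Prime := ⟨hp⟩
  have hp1 : 1 < p := hp.one_lt
  set n := p ^ j - 1 with hn
  have hpj : 1 < p ^ j := by
    calc 1 < p := hp1
    _ ≤ p ^ j := Nat.le_self_pow (by omega) p
  have hnpos : 0 < n := by omega
  -- digit sum of n
  have hsn : (p.digits n).sum = j * (p - 1) := sum_digits_pow_sub_one hp1 j
  -- digit sum of m * n
  have hsmn : (p.digits (m * n)).sum = j * (p - 1) := by
    rcases Nat.eq_or_lt_of_le hm1 with hm | hm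
    · rw [← hm, one_mul]; exact hsn
    · -- m ≥ 2; write m * n = (p ^ j - m) + p ^ j * (m - 1)
      have hmn : m * n = (p ^ j - m) + p ^ j * (m - 1) := by
        have h1 : m * (n + 1) = m * n + m := by ring
        have h2 : n + 1 = p ^ j := by omega
        rw [h2] at h1
        have h3 : p ^ j * (m - 1) + p ^ j = p ^ j * m := by
          rw [← Nat.mul_succ]; congr 1; omega
        have h4 : m * p ^ j = p ^ j * m := Nat.mul_comm _ _
        omega
      -- length of digits of p^j - m is ≤ j
      have hlt : p ^ j - m < p ^ j := by omega
      have hlen : (p.digits (p ^ j - m)).length ≤ j := by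
        by_cases h0 : p ^ j - m = 0
        · simp [h0]
        · rw [Nat.digits_len p _ hp1 h0]
          have := Nat.log_lt_of_lt_pow h0 hlt
          omega
      obtain ⟨k, hk⟩ := Nat.le.dest hlen
      have hm1' : 0 < m - 1 := by omega
      have happ := Nat.digits_append_zeroes_append_digits (b := p) (k := k)
        (m := m - 1) (n := p ^ j - m) hp1 hm1'
      rw [hk] at happ
      have hdig : p.digits (m * n) =
          p.digits (p ^ j - m) ++ List.replicate k 0 ++ p.digits (m - 1) := by
        rw [happ, hmn]
      rw [hdig]
      simp only [List.sum_append, List.sum_replicate, smul_zero, add_zero]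
      have := sum_digits_compl hp1 j (p ^ j - m) (m - 1) (by omega)
      omega
  have hge : j * (p - 1) ≤ n := by
    have := pow_sub_one_ge p j hp1; omega
  -- Legendre
  have hL1 : (p - 1) * padicValNat p (n)! = n - j * (p - 1) := by
    rw [sub_one_mul_padicValNat_factorial, hsn]
  have hL2 : (p - 1) * padicValNat p (m * n)! = m * n - j * (p - 1) := by
    rw [sub_one_mul_padicValNat_factorial, hsmn]
  -- key valuation identity
  have hkey : padicValNat p (m * n)! = m * padicValNat p (n)! + (m - 1) * j := by
    apply Nat.eq_of_mul_eq_mul_left (show 0 < p - 1 by omega)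
    obtain ⟨e, he⟩ := Nat.le.dest hge
    obtain ⟨f, hf⟩ := Nat.le.dest hm1
    have hVn : (p - 1) * padicValNat p (n)! = e := by omega
    have hmn3 : m * n = (1 + f) * (j * (p - 1) + e) := by rw [← hf, ← he]
    have hexp : (1 + f) * (j * (p - 1) + e) =
        j * (p - 1) + (f * (j * (p - 1)) + (1 + f) * e) := by ring
    have hgoal' : (p - 1) * (m * padicValNat p (n)! + (m - 1) * j) =
        m * ((p - 1) * padicValNat p (n)!) + ((m - 1) * j) * (p - 1) := by ring
    have hm1'' : m - 1 = f := by omega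
    have h7 : ((m - 1) * j) * (p - 1) = f * (j * (p - 1)) := by rw [hm1'']; ring
    have h8 : m * ((p - 1) * padicValNat p (n)!) = (1 + f) * e := by rw [hVn, ← hf]
    rw [hL2, hgoal', h7, h8, hmn3, hexp]
    omega
  have hdvd : (n)! ^ m ∣ (m * n)! := pow_dvd_factorial_mul n m
  rw [padicValNat.div_of_dvd hdvd, padicValNat.pow (n)! m, hkey]
  omega
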